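/- Fix a packet size d > 0 and an SNR γ > 0, and let ε(m) = Q(ω(m)) where ω(m) = √(m / V(γ)) · (C(γ) − d/m) · ln 2, Q(x) = ∫ₓ^∞ (1/√(2π)) e^{−t²/2} dt, C(γ) = log₂(1+γ), V(γ) = 1 − (1+γ)^{−2}. Then ε is convex on the interval [d / C(γ), ∞), i.e., on the set of blocklengths m for which the rate r = d/m satisfies r ≤ C(γ). -/

import Mathlib

open Set MeasureTheory intervalIntegral

/-- The Gaussian Q-function `Q(x) = ∫ₓ^∞ (1/√(2π)) e^{−t²/2} dt`. -/
noncomputable def gaussianQ (x : ℝ) : ℝ :=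
  ∫ t in Set.Ioi x, (Real.sqrt (2 * Real.pi))⁻¹ * Real.exp (-t ^ 2 / 2)

/-- Shannon capacity `C(γ) = log₂(1+γ)`. -/
noncomputable def Cap (γ : ℝ) : ℝ := Real.logb 2 (1 + γ)

/-- Channel dispersion `V(γ) = 1 − (1+γ)^{−2}`. -/
noncomputable def Vdisp (γ : ℝ) : ℝ := 1 - ((1 + γ) ^ 2)⁻¹

/-- The finite-blocklength auxiliary function
`ω(m,γ) = √(m / V(γ)) · (C(γ) − d/m) · ln 2`. -/
noncomputable def ωfbl (d γ m : ℝ) : ℝ :=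
  Real.sqrt (m / Vdisp γ) * (Cap γ - d / m) * Real.log 2

namespace Stmt12Aux

noncomputable def φ (t : ℝ) : ℝ := (Real.sqrt (2 * Real.pi))⁻¹ * Real.exp (-t ^ 2 / 2)

lemma φ_cont : Continuous φ := by
  unfold φ; fun_prop

lemma φ_nonneg (t : ℝ) : 0 ≤ φ t :=
  mul_nonneg (inv_nonneg.2 (Real.sqrt_nonneg _)) (Real.exp_nonneg _)

lemma φ_integrable : Integrable φ := by
  have h : Integrable (fun t : ℝ => Real.exp (-(1/2 : ℝ) * t ^ 2)) :=
    integrable_exp_neg_mul_sq (by norm_num)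
  have := h.const_mul (Real.sqrt (2 * Real.pi))⁻¹
  refine this.congr (Filter.Eventually.of_forall fun t => ?_)
  unfold φ; ring_nf

lemma gaussianQ_eq (x : ℝ) :
    gaussianQ x = gaussianQ 0 - ∫ t in (0:ℝ)..x, φ t := by
  have hIic : ∀ a : ℝ, IntegrableOn φ (Iic a) := fun a => φ_integrable.integrableOn
  have hIoi : ∀ a : ℝ, IntegrableOn φ (Ioi a) := fun a => φ_integrable.integrableOn
  have h1 : (∫ t in Iic x, φ t) + ∫ t in Ioi x, φ t = ∫ t, φ t :=
    integral_Iic_add_Ioi (hIic x) (hIoi x)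
  have h2 : (∫ t in Iic (0:ℝ), φ t) + ∫ t in Ioi (0:ℝ), φ t = ∫ t, φ t :=
    integral_Iic_add_Ioi (hIic 0) (hIoi 0)
  have h3 : (∫ t in Iic x, φ t) - ∫ t in Iic (0:ℝ), φ t = ∫ t in (0:ℝ)..x, φ t :=
    integral_Iic_sub_Iic (hIic 0) (hIic x)
  have hg : gaussianQ x = ∫ t in Ioi x, φ t := rfl
  have hg0 : gaussianQ 0 = ∫ t in Ioi (0:ℝ), φ t := rfl
  rw [hg, hg0]; linarith

lemma hasDerivAt_gaussianQ (x : ℝ) : HasDerivAt gaussianQ (-φ x) x := by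
  have h : HasDerivAt (fun y => ∫ t in (0:ℝ)..y, φ t) (φ x) x :=
    integral_hasDerivAt_right (φ_cont.intervalIntegrable _ _)
      (φ_cont.stronglyMeasurableAtFilter _ _) φ_cont.continuousAt
  have h2 : HasDerivAt (fun y => gaussianQ 0 - ∫ t in (0:ℝ)..y, φ t) (0 - φ x) x :=
    (hasDerivAt_const x (gaussianQ 0)).sub h
  simpa [zero_sub] using h2.congr_of_eventuallyEq
    (Filter.Eventually.of_forall fun y => (gaussianQ_eq y))

lemma diff_gaussianQ : Differentiable ℝ gaussianQ :=
  fun x => (hasDerivAt_gaussianQ x).differentiableAt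

lemma deriv_gaussianQ (x : ℝ) : deriv gaussianQ x = -φ x :=
  (hasDerivAt_gaussianQ x).deriv

lemma antitone_gaussianQ : Antitone gaussianQ := by
  refine antitone_of_deriv_nonpos diff_gaussianQ fun x => ?_
  rw [deriv_gaussianQ]
  simpa using φ_nonneg x

lemma convexOn_gaussianQ : ConvexOn ℝ (Ici (0:ℝ)) gaussianQ := by
  refine MonotoneOn.convexOn_of_deriv (convex_Ici 0)
    diff_gaussianQ.continuous.continuousOn diff_gaussianQ.differentiableOn ?_
  intro x hx y hy hxy
  rw [deriv_gaussianQ, deriv_gaussianQ, neg_le_neg_iff]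
  rw [interior_Ici] at hx hy
  unfold φ
  have : Real.exp (-y ^ 2 / 2) ≤ Real.exp (-x ^ 2 / 2) := by
    apply Real.exp_le_exp.2
    have hx0 : (0:ℝ) ≤ x := le_of_lt hx
    nlinarith
  exact mul_le_mul_of_nonneg_left this (inv_nonneg.2 (Real.sqrt_nonneg _))

end Stmt12Aux

open Stmt12Aux in
/-- For fixed `d > 0` and `γ > 0`, the FBL error probability
`ε(m) = Q(ω(m))` is convex on `[d / C(γ), ∞)`, i.e. on the set of blocklengths where
the rate `r = d/m` satisfies `r ≤ C(γ)`. -/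
theorem statement12 (d γ : ℝ) (hd : 0 < d) (hγ : 0 < γ) :
    ConvexOn ℝ (Set.Ici (d / Cap γ)) (fun m => gaussianQ (ωfbl d γ m)) := by
  have hC : 0 < Cap γ := Real.logb_pos (by norm_num) (by linarith)
  have hV : 0 < Vdisp γ := by
    have h1 : (1:ℝ) < (1 + γ) ^ 2 := by nlinarith
    have : ((1 + γ) ^ 2)⁻¹ < 1 := inv_lt_one_of_one_lt₀ h1
    unfold Vdisp; linarith
  set c := d / Cap γ with hc
  have hcpos : 0 < c := div_pos hd hC
  have hsV : 0 < Real.sqrt (Vdisp γ) := Real.sqrt_pos.2 hV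
  set K := Cap γ * Real.log 2 / Real.sqrt (Vdisp γ) with hK
  set L := d * Real.log 2 / Real.sqrt (Vdisp γ) with hL
  have hlog2 : 0 < Real.log 2 := Real.log_pos (by norm_num)
  have hKpos : 0 ≤ K := le_of_lt (div_pos (mul_pos hC hlog2) hsV)
  have hLpos : 0 ≤ L := le_of_lt (div_pos (mul_pos hd hlog2) hsV)
  -- rewrite ω on the domain
  have hωeq : ∀ m ∈ Ici c, ωfbl d γ m = K * Real.sqrt m - L * (Real.sqrt m)⁻¹ := by
    intro m hm
    have hmpos : 0 < m := lt_of_lt_of_le hcpos hm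
    have hs : 0 < Real.sqrt m := Real.sqrt_pos.2 hmpos
    have hsq : Real.sqrt m * Real.sqrt m = m := Real.mul_self_sqrt hmpos.le
    unfold ωfbl
    rw [Real.sqrt_div hmpos.le, hK, hL]
    field_simp
    linear_combination (-d) * hsq
  -- concavity of sqrt on the domain
  have hsqrt : ConcaveOn ℝ (Ici c) Real.sqrt :=
    Real.strictConcaveOn_sqrt.concaveOn.subset (Ici_subset_Ici.2 hcpos.le) (convex_Ici c)
  -- convexity of inv on Ioi 0
  have hinv0 : ConvexOn ℝ (Ioi (0:ℝ)) (fun x : ℝ => x⁻¹) := by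
    have := convexOn_zpow (𝕜 := ℝ) (-1)
    simpa using this
  -- convexity of m ↦ (√m)⁻¹ on the domain
  have hinv : ConvexOn ℝ (Ici c) (fun m => (Real.sqrt m)⁻¹) := by
    refine ⟨convex_Ici c, fun x hx y hy a b ha hb hab => ?_⟩
    have hxpos : 0 < x := lt_of_lt_of_le hcpos hx
    have hypos : 0 < y := lt_of_lt_of_le hcpos hy
    have hsx : 0 < Real.sqrt x := Real.sqrt_pos.2 hxpos
    have hsy : 0 < Real.sqrt y := Real.sqrt_pos.2 hypos
    have hcomb : a * Real.sqrt x + b * Real.sqrt y ≤ Real.sqrt (a * x + b * y) := by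
      simpa [smul_eq_mul] using hsqrt.2 hx hy ha hb hab
    have hcombpos : 0 < a * Real.sqrt x + b * Real.sqrt y := by
      rcases eq_or_lt_of_le ha with ha' | ha'
      · have hb' : 0 < b := by rw [← ha'] at hab; linarith
        positivity
      · positivity
    have h1 : (Real.sqrt (a • x + b • y))⁻¹ ≤ (a * Real.sqrt x + b * Real.sqrt y)⁻¹ := by
      simp only [smul_eq_mul]
      exact inv_anti₀ hcombpos hcomb
    have h2 : (a * Real.sqrt x + b * Real.sqrt y)⁻¹
        ≤ a * (Real.sqrt x)⁻¹ + b * (Real.sqrt y)⁻¹ := by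
      simpa [smul_eq_mul] using hinv0.2 (mem_Ioi.2 hsx) (mem_Ioi.2 hsy) ha hb hab
    exact le_trans h1 (by simpa [smul_eq_mul] using h2)
  -- concavity of ω on the domain
  have hωcon : ConcaveOn ℝ (Ici c) (ωfbl d γ) := by
    have h1 : ConcaveOn ℝ (Ici c) (fun m => K * Real.sqrt m) := by
      simpa [smul_eq_mul] using hsqrt.smul hKpos
    have h2 : ConvexOn ℝ (Ici c) (fun m => L * (Real.sqrt m)⁻¹) := by
      simpa [smul_eq_mul] using hinv.smul hLpos
    have := h1.add h2.neg
    refine this.congr fun m hm => ?_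
    simp only [Pi.add_apply, Pi.neg_apply]
    rw [hωeq m hm]; ring
  -- nonnegativity of ω on the domain
  have hωnn : ∀ m ∈ Ici c, 0 ≤ ωfbl d γ m := by
    intro m hm
    have hmpos : 0 < m := lt_of_lt_of_le hcpos hm
    have hdm : d / m ≤ Cap γ := by
      rw [div_le_iff₀ hmpos]
      calc d = Cap γ * c := by rw [hc]; field_simp
      _ ≤ Cap γ * m := by exact mul_le_mul_of_nonneg_left hm hC.le
    unfold ωfbl
    have : 0 ≤ Cap γ - d / m := by linarith
    positivity
  -- composition
  refine ⟨convex_Ici c, fun x hx y hy a b ha hb hab => ?_⟩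
  have hωx : 0 ≤ ωfbl d γ x := hωnn x hx
  have hωy : 0 ≤ ωfbl d γ y := hωnn y hy
  have hcon : a * ωfbl d γ x + b * ωfbl d γ y ≤ ωfbl d γ (a * x + b * y) := by
    simpa [smul_eq_mul] using hωcon.2 hx hy ha hb hab
  have step1 : gaussianQ (ωfbl d γ (a * x + b * y))
      ≤ gaussianQ (a * ωfbl d γ x + b * ωfbl d γ y) := antitone_gaussianQ hcon
  have step2 : gaussianQ (a * ωfbl d γ x + b * ωfbl d γ y)
      ≤ a * gaussianQ (ωfbl d γ x) + b * gaussianQ (ωfbl d γ y) := by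
    simpa [smul_eq_mul] using
      convexOn_gaussianQ.2 (mem_Ici.2 hωx) (mem_Ici.2 hωy) ha hb hab
  simp only [smul_eq_mul]
  exact le_trans step1 step2
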